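/- Let Q be a quiver, let C_1,…,C_r be its primitive oriented cycles (oriented cycles with no repeated vertices) with characteristic vectors ε_{C_1},…,ε_{C_r} ∈ {0,1}^{Q1}, and let S = {x ∈ ℕ^{Q1} : F(x) = 0} be the monoid of nonnegative integral circulations of Q (which is generated by ε_{C_1},…,ε_{C_r}). Let d be the rank of the subgroup of ℤ^{Q1} generated by S (equivalently, the dimension of the cone ∇(Q,0), i.e., the dimension of the affine toric quiver variety M(Q,0)), and assume d > 0. Then the kernel of the ℂ-algebra homomorphism φ : ℂ[t_1,…,t_r] → ℂ[x_a : a ∈ Q1], t_i ↦ x^{ε_{C_i}} = ∏_{a ∈ C_i} x_a, is generated by polynomials of total degree at most d − 1. -/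

import Mathlib

set_option linter.unusedSectionVars false

open MvPolynomial

open Classical in
/-- `x ∈ ℕ^{Q1}` is the characteristic vector of a primitive oriented cycle of the
quiver: an oriented cycle visiting no vertex twice. -/
def IsPrimitiveCycleVector {V A : Type} (s t : A → V) (x : A → ℕ) : Prop :=
  ∃ (n : ℕ) (f : Fin (n + 1) → A),
    Function.Injective (fun i => s (f i)) ∧
    (∀ i : Fin (n + 1), t (f i) = s (f (i + 1))) ∧
    ∀ a : A, x a = if a ∈ Set.range f then 1 else 0

namespace Stmt18Aux

variable {V A : Type} [Fintype V] [Fintype A] [DecidableEq V] [DecidableEq A]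
variable {s t : A → V}

lemma pcv_le_one {x : A → ℕ} (h : IsPrimitiveCycleVector s t x) (a : A) : x a ≤ 1 := by
  obtain ⟨n, f, -, -, hx⟩ := h
  rw [hx a]; split <;> omega

lemma pcv_exists_one {x : A → ℕ} (h : IsPrimitiveCycleVector s t x) : ∃ a, x a = 1 := by
  obtain ⟨n, f, -, -, hx⟩ := h
  exact ⟨f 0, by rw [hx (f 0)]; simp⟩

lemma pcv_sum_pos {x : A → ℕ} (h : IsPrimitiveCycleVector s t x) : 0 < ∑ a, x a := by
  obtain ⟨a, ha⟩ := pcv_exists_one h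
  have : x a ≤ ∑ b, x b := Finset.single_le_sum (fun b _ => Nat.zero_le _) (Finset.mem_univ a)
  omega

/-- auxiliary: sum of an indicator of the range of an injective map against a predicate -/
lemma sum_range_indicator {n : ℕ} (f : Fin (n+1) → A) (hf : Function.Injective f)
    (P : A → Prop) [DecidablePred P] {x : A → ℕ}
    (hx1 : ∀ a ∈ Set.range f, x a = 1) (hx0 : ∀ (a : A), a ∉ Set.range f → x a = 0) :
    ∑ a : A, (if P a then x a else 0) = ∑ k : Fin (n+1), (if P (f k) then 1 else 0) := by
  classical
  have himg : ∑ a ∈ Finset.univ.image f, (if P a then x a else 0)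
      = ∑ a : A, (if P a then x a else 0) := by
    apply Finset.sum_subset (Finset.subset_univ _)
    intro a _ ha
    have : a ∉ Set.range f := by
      intro ⟨k, hk⟩
      exact ha (Finset.mem_image.mpr ⟨k, Finset.mem_univ _, hk⟩)
    rw [hx0 a this, ite_self]
  rw [← himg, Finset.sum_image (fun k _ l _ h => hf h)]
  apply Finset.sum_congr rfl
  intro k _
  rw [hx1 (f k) ⟨k, rfl⟩]

/-- a primitive cycle vector is a circulation -/
lemma pcv_circ {x : A → ℕ} (h : IsPrimitiveCycleVector s t x) (v : V) :
    ∑ a : A, (if t a = v then x a else 0) = ∑ a : A, (if s a = v then x a else 0) := by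
  classical
  obtain ⟨n, f, hsinj, hcyc, hx⟩ := h
  have hf : Function.Injective f := fun i j hij => hsinj (by simp [hij])
  have hx1 : ∀ a ∈ Set.range f, x a = 1 := fun a ha => by rw [hx a, if_pos ha]
  have hx0 : ∀ (a : A), a ∉ Set.range f → x a = 0 := fun a ha => by rw [hx a, if_neg ha]
  refine (sum_range_indicator f hf (fun a => t a = v) hx1 hx0).trans
    (Eq.trans ?_ (sum_range_indicator f hf (fun a => s a = v) hx1 hx0).symm)
  refine Fintype.sum_equiv (Equiv.addRight (1 : Fin (n+1))) _ _ ?_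
  intro k
  simp only [Equiv.coe_addRight]
  rw [hcyc k]
  rfl

open Fin.NatCast in
/-- a primitive cycle vector dominated by another one equals it -/
lemma pcv_le_pcv {x y : A → ℕ} (hx : IsPrimitiveCycleVector s t x)
    (hy : IsPrimitiveCycleVector s t y) (hle : ∀ a, x a ≤ y a) : x = y := by
  obtain ⟨m, g, hgs, hgc, hgx⟩ := hx
  obtain ⟨n, f, hfs, hfc, hfy⟩ := hy
  have hginj : Function.Injective g := fun i j hij => hgs (by simp [hij])
  have hfinj : Function.Injective f := fun i j hij => hfs (by simp [hij])
  -- every arc of g is an arc of f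
  have hmem : ∀ k : Fin (m+1), g k ∈ Set.range f := by
    intro k
    have h1 : x (g k) = 1 := by rw [hgx]; simp
    have := hle (g k)
    rw [h1, hfy (g k)] at this
    by_contra hc
    rw [if_neg hc] at this; omega
  -- step lemma
  have hstep : ∀ (k : Fin (m+1)) (l : Fin (n+1)), g k = f l → g (k+1) = f (l+1) := by
    intro k l hkl
    obtain ⟨l', hl'⟩ := hmem (k+1)
    have : s (f l') = s (f (l+1)) := by
      rw [hl', ← hgc k, hkl, hfc l]
    have := hfs this
    rw [← hl', this]
  obtain ⟨l₀, hl₀⟩ := hmem 0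
  -- orbit lemma
  have horb : ∀ N : ℕ, g (N : Fin (m+1)) = f (l₀ + (N : Fin (n+1))) := by
    intro N
    induction N with
    | zero => simpa using hl₀.symm
    | succ N ih =>
        have h1 : ((N+1 : ℕ) : Fin (m+1)) = (N : Fin (m+1)) + 1 := by push_cast; ring
        have h2 : ((N+1 : ℕ) : Fin (n+1)) = (N : Fin (n+1)) + 1 := by push_cast; ring
        rw [h1, h2, hstep _ _ ih, add_assoc]
  -- range f ⊆ range g
  have hsub : Set.range f ⊆ Set.range g := by
    rintro a ⟨l, rfl⟩
    refine ⟨((l - l₀ : Fin (n+1)).val : Fin (m+1)), ?_⟩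
    rw [horb (l - l₀ : Fin (n+1)).val]
    congr 1
    rw [Fin.cast_val_eq_self]
    exact add_sub_cancel l₀ l
  have hr : Set.range g = Set.range f :=
    Set.Subset.antisymm (Set.range_subset_iff.mpr hmem) hsub
  funext a
  rw [hgx a, hfy a]
  by_cases hm : a ∈ Set.range g
  · rw [if_pos hm, if_pos (hr ▸ hm)]
  · rw [if_neg hm, if_neg (fun hc => hm (hr.symm ▸ hc))]


section Quiver

variable {r : ℕ} {ε : Fin r → (A → ℕ)}

/-- flow decomposition: every nonnegative integral circulation is an ℕ-combination of the
primitive cycle vectors. -/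
lemma flow_decomp (hall : ∀ x : A → ℕ, IsPrimitiveCycleVector s t x → ∃ i, x = ε i)
    (N : ℕ) (z : A → ℕ) (hN : ∑ a, z a ≤ N)
    (hCS : ∀ v : V, ∑ a : A, (if t a = v then z a else 0) = ∑ a : A, (if s a = v then z a else 0)) :
    ∃ w : Fin r → ℕ, ∀ a, z a = ∑ i, w i * ε i a := by
  classical
  induction N generalizing z with
  | zero =>
      refine ⟨fun _ => 0, fun a => ?_⟩
      have hz : z a = 0 := by
        have : z a ≤ ∑ b, z b := Finset.single_le_sum (fun b _ => Nat.zero_le _) (Finset.mem_univ a)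
        omega
      simp [hz]
  | succ N ih =>
      by_cases h0 : ∑ a, z a = 0
      · refine ⟨fun _ => 0, fun a => ?_⟩
        have hz : z a = 0 := by
          have : z a ≤ ∑ b, z b := Finset.single_le_sum (fun b _ => Nat.zero_le _) (Finset.mem_univ a)
          omega
        simp [hz]
      · -- pick a starting arc
        obtain ⟨a₀, ha₀⟩ : ∃ a, 0 < z a := by
          by_contra hc; push_neg at hc
          exact h0 (Finset.sum_eq_zero (fun a _ => by have := hc a; omega))
        -- the walk step
        have hstep : ∀ a : A, 0 < z a → ∃ b, s b = t a ∧ 0 < z b := by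
          intro a ha
          by_contra hc; push_neg at hc
          have h1 := hCS (t a)
          have h2 : z a ≤ ∑ b : A, (if t b = t a then z b else 0) := by
            have := Finset.single_le_sum (f := fun b : A => if t b = t a then z b else 0)
              (fun b _ => by positivity) (Finset.mem_univ a)
            simpa using this
          have h3 : ∑ b : A, (if s b = t a then z b else 0) = 0 := by
            refine Finset.sum_eq_zero (fun b _ => ?_)
            by_cases hb : s b = t a
            · have := hc b hb; rw [if_pos hb]; omega
            · rw [if_neg hb]
          omega
        -- infinite walk
        set next : {a // 0 < z a} → {a // 0 < z a} :=
          fun p => ⟨(hstep p.1 p.2).choose, (hstep p.1 p.2).choose_spec.2⟩ with hnext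
        set g : ℕ → {a // 0 < z a} := fun n => next^[n] ⟨a₀, ha₀⟩ with hg
        have hgs : ∀ n : ℕ, s ((g (n+1)).1) = t ((g n).1) := by
          intro n
          have : g (n+1) = next (g n) := Function.iterate_succ_apply' next n _
          rw [this]
          exact (hstep (g n).1 (g n).2).choose_spec.1
        set vfun : ℕ → V := fun n => s ((g n).1) with hvfun
        -- pigeonhole, with ordered indices
        obtain ⟨i, j, hlt, hveq⟩ : ∃ i j, i < j ∧ vfun i = vfun j := by
          obtain ⟨i, j, hij, hveq⟩ := Finite.exists_ne_map_eq_of_infinite vfun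
          rcases lt_or_gt_of_ne hij with h | h
          · exact ⟨i, j, h, hveq⟩
          · exact ⟨j, i, h, hveq.symm⟩
        have hPex : ∃ nn, ∃ m, m < nn ∧ vfun m = vfun nn := ⟨j, i, hlt, hveq⟩
        set Nf := Nat.find hPex with hNf
        obtain ⟨m, hmN, hvm⟩ := Nat.find_spec hPex
        have hmin : ∀ nn, nn < Nf → ∀ m', m' < nn → vfun m' ≠ vfun nn := by
          intro nn hnn m' hm' hveq'
          exact Nat.find_min hPex hnn ⟨m', hm', hveq'⟩
        set L := Nf - m - 1 with hLdef
        have hL : m + (L + 1) = Nf := by omega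
        set f : Fin (L+1) → A := fun k => (g (m + k.1)).1 with hf
        have hsinj : Function.Injective (fun k : Fin (L+1) => s (f k)) := by
          intro k1 k2 heq
          by_contra hne
          have h1 : k1.1 ≠ k2.1 := fun h => hne (Fin.ext h)
          have heq' : vfun (m + k1.1) = vfun (m + k2.1) := heq
          rcases Nat.lt_or_ge k1.1 k2.1 with h | h
          · exact hmin (m + k2.1) (by omega) (m + k1.1) (by omega) heq'
          · have h2 : k2.1 < k1.1 := by omega
            exact hmin (m + k1.1) (by omega) (m + k2.1) (by omega) heq'.symm
        have hcyc : ∀ k : Fin (L+1), t (f k) = s (f (k+1)) := by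
          intro k
          have hval := Fin.val_add_one k
          by_cases hk : k = Fin.last L
          · have hv1 : (k+1).1 = 0 := by rw [hval, if_pos hk]
            have hk1 : k.1 = L := by rw [hk]; rfl
            have : t (f k) = vfun (m + k.1 + 1) := (hgs (m + k.1)).symm
            rw [this]
            have h2 : m + k.1 + 1 = Nf := by omega
            rw [h2, ← hvm]
            show vfun m = s (f (k+1))
            have : f (k+1) = (g (m + 0)).1 := by rw [hf]; simp [hv1]
            rw [this]
            show vfun m = vfun (m + 0)
            rw [Nat.add_zero]
          · have hv1 : (k+1).1 = k.1 + 1 := by rw [hval, if_neg hk]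
            have : t (f k) = vfun (m + k.1 + 1) := (hgs (m + k.1)).symm
            rw [this]
            show vfun (m + k.1 + 1) = s (f (k+1))
            have : f (k+1) = (g (m + (k.1 + 1))).1 := by rw [hf]; simp [hv1]
            rw [this]
            have h3 : m + k.1 + 1 = m + (k.1 + 1) := by omega
            rw [h3]
        -- the extracted primitive cycle vector
        set xc : A → ℕ := fun a => if a ∈ Set.range f then 1 else 0 with hxc
        have hxc1 : ∀ a, a ∈ Set.range f → xc a = 1 := fun a h => by
          simp only [hxc]; rw [if_pos h]
        have hxc0 : ∀ a, a ∉ Set.range f → xc a = 0 := fun a h => by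
          simp only [hxc]; rw [if_neg h]
        have hpcv : IsPrimitiveCycleVector s t xc := by
          refine ⟨L, f, hsinj, hcyc, fun a => ?_⟩
          by_cases h : a ∈ Set.range f
          · rw [hxc1 a h, if_pos h]
          · rw [hxc0 a h, if_neg h]
        obtain ⟨i₀, hi₀⟩ := hall xc hpcv
        have hεle : ∀ a, ε i₀ a ≤ z a := by
          intro a
          rw [← hi₀]
          by_cases hmem : a ∈ Set.range f
          · rw [hxc1 a hmem]
            obtain ⟨k, hk⟩ := hmem
            have hk' : (g (m + k.1)).1 = a := hk
            rw [← hk']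
            exact (g (m + k.1)).2
          · rw [hxc0 a hmem]
            exact Nat.zero_le _
        have hε1 : 1 ≤ ∑ a, ε i₀ a := by
          have hx1 : ε i₀ (f 0) = 1 := by
            rw [← hi₀]
            exact hxc1 _ ⟨0, rfl⟩
          have : ε i₀ (f 0) ≤ ∑ a, ε i₀ a :=
            Finset.single_le_sum (fun b _ => Nat.zero_le _) (Finset.mem_univ _)
          omega
        set z' : A → ℕ := fun a => z a - ε i₀ a with hz'
        have hkey : ∀ (h : A → V) (v : V),
            ∑ a : A, (if h a = v then z' a else 0)
              = ∑ a : A, (if h a = v then z a else 0) - ∑ a : A, (if h a = v then ε i₀ a else 0) := by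
          intro h v
          rw [← Finset.sum_tsub_distrib _ (fun a _ => by by_cases hha : h a = v <;> simp [hha, hεle a])]
          refine Finset.sum_congr rfl (fun a _ => ?_)
          by_cases hha : h a = v <;> simp [hha, hz']
        have hCS' : ∀ v : V, ∑ a : A, (if t a = v then z' a else 0)
            = ∑ a : A, (if s a = v then z' a else 0) := by
          intro v
          have hpcv' : IsPrimitiveCycleVector s t (ε i₀) := hi₀ ▸ hpcv
          rw [hkey t v, hkey s v, hCS v, pcv_circ hpcv' v]
        have hsum' : ∑ a, z' a ≤ N := by
          have h1 : ∑ a, z' a = ∑ a, z a - ∑ a, ε i₀ a :=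
            Finset.sum_tsub_distrib _ (fun a _ => hεle a)
          omega
        obtain ⟨w', hw'⟩ := ih z' hsum' hCS'
        refine ⟨fun k => w' k + (if k = i₀ then 1 else 0), fun a => ?_⟩
        have hsplit : ∑ i_1, (w' i_1 + if i_1 = i₀ then 1 else 0) * ε i_1 a
            = (∑ i_1, w' i_1 * ε i_1 a) + ∑ i_1, (if i_1 = i₀ then 1 else 0) * ε i_1 a := by
          rw [← Finset.sum_add_distrib]
          refine Finset.sum_congr rfl (fun i_1 _ => by ring)
        rw [hsplit, ← hw' a]
        have h2 : ∑ i_1, (if i_1 = i₀ then 1 else 0) * ε i_1 a = ε i₀ a := by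
          rw [Finset.sum_eq_single i₀]
          · rw [if_pos rfl, one_mul]
          · intro b _ hb; rw [if_neg hb, zero_mul]
          · intro h; exact absurd (Finset.mem_univ i₀) h
        rw [h2]
        have hle := hεle a
        show z a = z a - ε i₀ a + ε i₀ a
        omega


variable (ε) in
/-- the circulation associated to a formal sum of cycles -/
def sig (u : Fin r → ℕ) : A → ℕ := fun a => ∑ i, u i * ε i a

lemma sig_apply (u : Fin r → ℕ) (a : A) : sig ε u a = ∑ i, u i * ε i a := rfl

lemma le_sig (u : Fin r → ℕ) (i : Fin r) (a : A) : u i * ε i a ≤ sig ε u a := by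
  rw [sig_apply]
  exact Finset.single_le_sum (f := fun k => u k * ε k a) (fun b _ => Nat.zero_le _)
    (Finset.mem_univ i)

variable (s t) in
/-- the set of nonnegative integral circulations, over ℤ -/
def setS : Set (A → ℤ) :=
  {x : A → ℤ | (∀ a, 0 ≤ x a) ∧ ∀ v : V,
    (∑ a : A, if t a = v then x a else 0) - (∑ a : A, if s a = v then x a else 0) = 0}

lemma eps_mem_setS (hε : ∀ i, IsPrimitiveCycleVector s t (ε i)) (i : Fin r) :
    (fun a => (ε i a : ℤ)) ∈ setS s t := by
  constructor
  · intro a; positivity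
  · intro v
    have h := pcv_circ (hε i) v
    have hcast : ∀ (h' : A → V), ∑ a : A, (if h' a = v then (ε i a : ℤ) else 0)
        = ((∑ a : A, if h' a = v then ε i a else 0 : ℕ) : ℤ) := by
      intro h'
      push_cast
      refine Finset.sum_congr rfl (fun a _ => ?_)
      by_cases hh : h' a = v <;> simp [hh]
    rw [hcast t, hcast s, h, sub_self]

/-- THE KEY LEMMA: if `u` and `v` are disjoint cycle decompositions of the same
circulation and `u` has at least `d` parts, then some cycle of `u` plus some cycle of `v`
fits inside the circulation. -/
lemma lemZ (hε : ∀ i, IsPrimitiveCycleVector s t (ε i)) (hinj : Function.Injective ε)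
    (d : ℕ) (hd : 0 < d)
    (hdim : d = Module.finrank ℤ ↥(Submodule.span ℤ (setS s t)))
    (u v : Fin r → ℕ) (huv : sig ε u = sig ε v)
    (hdisj : ∀ i, ¬(0 < u i ∧ 0 < v i)) (hbig : d ≤ ∑ i, u i) :
    ∃ i j, 0 < u i ∧ 0 < v j ∧ ∀ a, ε i a + ε j a ≤ sig ε u a := by
  classical
  by_contra hcon
  push_neg at hcon
  -- hcon : ∀ i j, 0 < u i → 0 < v j → ∃ a, sig ε u a < ε i a + ε j a
  obtain ⟨i₀, hi₀⟩ : ∃ i, 0 < u i := by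
    by_contra hc; push_neg at hc
    have : ∑ i, u i = 0 := Finset.sum_eq_zero (fun i _ => by have := hc i; omega)
    omega
  obtain ⟨j₀, hj₀⟩ : ∃ j, 0 < v j := by
    obtain ⟨a₁, ha₁⟩ := pcv_exists_one (hε i₀)
    have h1 : 0 < sig ε v a₁ := by
      rw [← huv]
      have := le_sig (ε := ε) u i₀ a₁
      have h2 : 1 ≤ u i₀ * ε i₀ a₁ := by rw [ha₁]; omega
      omega
    by_contra hc; push_neg at hc
    have : sig ε v a₁ = 0 := by
      rw [sig_apply]
      exact Finset.sum_eq_zero (fun j _ => by rw [Nat.le_zero.mp (hc j), zero_mul])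
    omega
  -- all multiplicities are 1
  have step1 : ∀ i, 0 < u i → u i = 1 := by
    intro i hi
    by_contra h2
    have h2' : 2 ≤ u i := by omega
    obtain ⟨a, ha⟩ := hcon i j₀ hi hj₀
    have : ε i a + ε j₀ a ≤ sig ε u a := by
      by_cases he : ε i a = 0
      · rw [he, zero_add]
        calc ε j₀ a ≤ v j₀ * ε j₀ a := Nat.le_mul_of_pos_left _ hj₀
        _ ≤ sig ε v a := le_sig v j₀ a
        _ = sig ε u a := by rw [← huv]
      · have he1 : ε i a = 1 := by have := pcv_le_one (hε i) a; omega
        have hb := pcv_le_one (hε j₀) a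
        calc ε i a + ε j₀ a ≤ u i * ε i a := by rw [he1]; omega
        _ ≤ sig ε u a := le_sig u i a
    omega
  have step1v : ∀ j, 0 < v j → v j = 1 := by
    intro j hj
    by_contra h2
    have h2' : 2 ≤ v j := by omega
    obtain ⟨a, ha⟩ := hcon i₀ j hi₀ hj
    have : ε i₀ a + ε j a ≤ sig ε u a := by
      by_cases he : ε j a = 0
      · rw [he, add_zero]
        calc ε i₀ a ≤ u i₀ * ε i₀ a := Nat.le_mul_of_pos_left _ hi₀
        _ ≤ sig ε u a := le_sig u i₀ a
      · have he1 : ε j a = 1 := by have := pcv_le_one (hε j) a; omega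
        have hb := pcv_le_one (hε i₀) a
        calc ε i₀ a + ε j a ≤ v j * ε j a := by rw [he1]; omega
        _ ≤ sig ε v a := le_sig v j a
        _ = sig ε u a := by rw [← huv]
    omega
  -- critical private arcs
  have harc : ∀ i j, 0 < u i → 0 < v j →
      ∃ a, ε i a = 1 ∧ ε j a = 1 ∧ sig ε u a = 1 := by
    intro i j hi hj
    obtain ⟨a, ha⟩ := hcon i j hi hj
    have hb1 := pcv_le_one (hε i) a
    have hb2 := pcv_le_one (hε j) a
    have hεi : ε i a = 1 := by
      by_contra hc
      have hc0 : ε i a = 0 := by omega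
      have : ε j a ≤ sig ε u a := by
        calc ε j a ≤ v j * ε j a := Nat.le_mul_of_pos_left _ hj
        _ ≤ sig ε v a := le_sig v j a
        _ = sig ε u a := by rw [← huv]
      omega
    have hεj : ε j a = 1 := by
      by_contra hc
      have hc0 : ε j a = 0 := by omega
      have : ε i a ≤ sig ε u a := by
        calc ε i a ≤ u i * ε i a := Nat.le_mul_of_pos_left _ hi
        _ ≤ sig ε u a := le_sig u i a
      omega
    refine ⟨a, hεi, hεj, ?_⟩
    have h1 : u i * ε i a ≤ sig ε u a := le_sig u i a
    rw [hεi, mul_one] at h1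
    omega
  -- uniqueness of the cycle through an arc of multiplicity one
  have huniq : ∀ (w : Fin r → ℕ) (a : A) (i : Fin r), sig ε w a = 1 → 0 < w i →
      ε i a = 1 → ∀ i', i' ≠ i → w i' * ε i' a = 0 := by
    intro w a i hsig hwi hεi i' hne
    rw [sig_apply] at hsig
    have hsum : w i * ε i a + ∑ k ∈ Finset.univ.erase i, w k * ε k a = ∑ k, w k * ε k a :=
      Finset.add_sum_erase _ (f := fun k => w k * ε k a) (Finset.mem_univ i)
    have h1 : 1 ≤ w i * ε i a := by rw [hεi]; omega
    have h2 : ∑ k ∈ Finset.univ.erase i, w k * ε k a = 0 := by omega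
    have := (Finset.sum_eq_zero_iff.mp h2) i' (Finset.mem_erase.mpr ⟨hne, Finset.mem_univ i'⟩)
    exact this
  by_cases hv2 : ∃ j, 0 < v j ∧ j ≠ j₀
  · -- the independent family case
    obtain ⟨j₁, hj₁, hj₁0⟩ := hv2
    -- arcs
    have harc1 : ∀ p : {i // 0 < u i}, ∃ a, ε p.1 a = 1 ∧ ε j₁ a = 1 ∧ sig ε u a = 1 :=
      fun p => harc p.1 j₁ p.2 hj₁
    have harc0 := harc i₀ j₀ hi₀ hj₀
    set a₀ := harc0.choose with ha₀def
    obtain ⟨ha₀i, ha₀j, ha₀s⟩ := harc0.choose_spec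
    set arc : {i // 0 < u i} → A := fun p => (harc1 p).choose with harcdef
    have harcspec : ∀ p, ε p.1 (arc p) = 1 ∧ ε j₁ (arc p) = 1 ∧ sig ε u (arc p) = 1 :=
      fun p => (harc1 p).choose_spec
    -- the family
    set F : ({i // 0 < u i} ⊕ Unit) → (A → ℤ) :=
      Sum.elim (fun p => fun a => (ε p.1 a : ℤ)) (fun _ => fun a => (ε j₀ a : ℤ)) with hF
    have hlin : LinearIndependent ℤ F := by
      rw [Fintype.linearIndependent_iff]
      intro c hc
      have hcfun : ∀ a : A, ∑ k, c k * F k a = 0 := by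
        intro a
        have := congrFun hc a
        simpa [Finset.sum_apply] using this
      have hinl : ∀ p : {i // 0 < u i}, c (Sum.inl p) = 0 := by
        intro p
        have h := hcfun (arc p)
        obtain ⟨hp1, hp2, hp3⟩ := harcspec p
        rw [Fintype.sum_sum_type] at h
        -- the inr term vanishes
        have hj₀0 : ε j₀ (arc p) = 0 := by
          have hsv : sig ε v (arc p) = 1 := by rw [← huv]; exact hp3
          have := huniq v (arc p) j₁ hsv hj₁ hp2 j₀ (Ne.symm hj₁0)
          have hvj₀ : v j₀ = 1 := step1v j₀ hj₀
          rw [hvj₀, one_mul] at this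
          exact this
        have hrest : ∀ q : {i // 0 < u i}, q ≠ p → (ε q.1 (arc p) : ℤ) = 0 := by
          intro q hq
          have hne : (q.1 : Fin r) ≠ p.1 := by
            intro hqp; exact hq (Subtype.ext hqp)
          have := huniq u (arc p) p.1 hp3 p.2 hp1 q.1 hne
          have huq : u q.1 = 1 := step1 q.1 q.2
          rw [huq, one_mul] at this
          exact_mod_cast Nat.cast_inj.mpr this
        have hsum1 : ∑ q : {i // 0 < u i}, c (Sum.inl q) * F (Sum.inl q) (arc p)
            = c (Sum.inl p) := by
          rw [Finset.sum_eq_single p]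
          · simp only [hF, Sum.elim_inl, hp1]; push_cast; ring
          · intro q _ hq
            have := hrest q hq
            simp only [hF, Sum.elim_inl, this, mul_zero]
          · intro hmem; exact absurd (Finset.mem_univ p) hmem
        have hsum2 : ∑ (q : Unit), c (Sum.inr q) * F (Sum.inr q) (arc p) = 0 := by
          simp only [hF, Sum.elim_inr, Finset.univ_unique, Finset.sum_singleton, hj₀0]
          push_cast
          ring
        rw [hsum1, hsum2] at h
        omega
      intro k
      match k with
      | Sum.inl p => exact hinl p
      | Sum.inr q =>
        cases q
        have h := hcfun a₀
        rw [Fintype.sum_sum_type] at h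
        have hsum1 : ∑ q : {i // 0 < u i}, c (Sum.inl q) * F (Sum.inl q) a₀ = 0 :=
          Finset.sum_eq_zero (fun q _ => by rw [hinl q, zero_mul])
        have hsum2 : ∑ (q : Unit), c (Sum.inr q) * F (Sum.inr q) a₀
            = c (Sum.inr ()) := by
          simp only [hF, Sum.elim_inr, Finset.univ_unique, Finset.sum_singleton, ha₀def, ha₀j]
          push_cast; ring
        rw [hsum1, hsum2] at h
        rw [zero_add] at h
        exact h
    -- lift to the span
    set M := Submodule.span ℤ (setS s t) with hM
    have hmem : ∀ k, F k ∈ M := by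
      rintro (p | q)
      · exact Submodule.subset_span (eps_mem_setS hε p.1)
      · exact Submodule.subset_span (eps_mem_setS hε j₀)
    set F' : ({i // 0 < u i} ⊕ Unit) → ↥M := fun k => ⟨F k, hmem k⟩ with hF'
    have hlin' : LinearIndependent ℤ F' := by
      apply LinearIndependent.of_comp M.subtype
      exact hlin
    haveI : IsNoetherian ℤ (A → ℤ) := inferInstance
    haveI : Module.Finite ℤ ↥M := Module.Finite.iff_fg.mpr (IsNoetherian.noetherian M)
    have hcardle := hlin'.fintype_card_le_finrank
    rw [← hdim] at hcardle
    have hcard : Fintype.card ({i // 0 < u i} ⊕ Unit) = (∑ i, u i) + 1 := by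
      rw [Fintype.card_sum, Fintype.card_unit, Fintype.card_subtype]
      congr 1
      rw [Finset.card_filter]
      refine (Finset.sum_congr rfl (fun i _ => ?_)).symm
      by_cases hi : 0 < u i
      · rw [if_pos hi, step1 i hi]
      · rw [if_neg hi]; omega
    omega
  · -- v is a single cycle
    push_neg at hv2
    have hvj₀ : v j₀ = 1 := step1v j₀ hj₀
    have hx : ∀ a, sig ε v a = ε j₀ a := by
      intro a
      rw [sig_apply, Finset.sum_eq_single j₀]
      · rw [hvj₀, one_mul]
      · intro j _ hj
        have : v j = 0 := by
          by_contra hc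
          exact hj (hv2 j (by omega))
        rw [this, zero_mul]
      · intro hmem; exact absurd (Finset.mem_univ j₀) hmem
    have hle : ∀ a, ε i₀ a ≤ ε j₀ a := by
      intro a
      have h1 : u i₀ * ε i₀ a ≤ sig ε u a := le_sig u i₀ a
      rw [step1 i₀ hi₀, one_mul] at h1
      rw [huv] at h1
      rw [hx a] at h1
      exact h1
    have := pcv_le_pcv (hε i₀) (hε j₀) hle
    have : i₀ = j₀ := hinj this
    exact hdisj i₀ ⟨hi₀, this ▸ hj₀⟩


section Algebra

/-- function to finsupp -/
noncomputable def DU {τ : Type} [Fintype τ] (u : τ → ℕ) : τ →₀ ℕ := Finsupp.equivFunOnFinite.symm u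

lemma DU_apply {τ : Type} [Fintype τ] (u : τ → ℕ) (i : τ) : DU u i = u i :=
  rfl

variable (ε) in
/-- the monomial `t^u` -/
noncomputable def Mon (u : Fin r → ℕ) : MvPolynomial (Fin r) ℂ := monomial (DU u) 1

variable (ε) in
/-- the binomial `t^u - t^v` -/
noncomputable def Bin (u v : Fin r → ℕ) : MvPolynomial (Fin r) ℂ := Mon (r := r) u - Mon v

variable (ε) in
/-- the generating monomials `x^{ε i}` -/
noncomputable def Fgen : Fin r → MvPolynomial A ℂ := fun i => ∏ a : A, (X a : MvPolynomial A ℂ) ^ ε i a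

lemma prod_monomial {τ ι : Type} [Fintype τ] [DecidableEq τ] (S : Finset ι) (h : ι → (τ →₀ ℕ)) :
    (∏ i ∈ S, monomial (h i) (1:ℂ)) = monomial (∑ i ∈ S, h i) 1 := by
  classical
  induction S using Finset.induction with
  | empty => simp
  | insert _ _ hnot ih =>
      rw [Finset.prod_insert hnot, ih, monomial_mul, one_mul, Finset.sum_insert hnot]

lemma sum_single_eq {τ : Type} [Fintype τ] [DecidableEq τ] (g : τ → ℕ) :
    ∑ a : τ, Finsupp.single a (g a) = DU g := by
  ext b
  rw [Finsupp.finset_sum_apply, DU_apply]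
  rw [Finset.sum_eq_single b]
  · rw [Finsupp.single_eq_same]
  · intro a _ ha; exact Finsupp.single_eq_of_ne' ha
  · intro h; exact absurd (Finset.mem_univ b) h

lemma Fgen_eq (i : Fin r) : Fgen ε i = monomial (DU (ε i)) 1 := by
  rw [Fgen]
  have : ∀ a : A, (X a : MvPolynomial A ℂ) ^ ε i a = monomial (Finsupp.single a (ε i a)) 1 :=
    fun a => X_pow_eq_monomial
  rw [Finset.prod_congr rfl (fun a _ => this a), prod_monomial, sum_single_eq]

lemma aeval_Mon (u : Fin r → ℕ) (c : ℂ) :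
    aeval (Fgen ε) (monomial (DU u) c) = monomial (DU (sig ε u)) c := by
  rw [aeval_monomial]
  rw [Finsupp.prod_fintype _ _ (fun i => pow_zero _)]
  have h1 : ∀ i : Fin r, Fgen ε i ^ (DU u) i = monomial ((u i) • DU (ε i)) 1 := by
    intro i
    rw [Fgen_eq, monomial_pow, one_pow, DU_apply]
  rw [Finset.prod_congr rfl (fun i _ => h1 i), prod_monomial]
  have h2 : ∑ i : Fin r, (u i) • DU (ε i) = DU (sig ε u) := by
    ext a
    rw [Finsupp.finset_sum_apply, DU_apply, sig_apply]
    refine Finset.sum_congr rfl (fun i _ => ?_)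
    rw [Finsupp.smul_apply, DU_apply, smul_eq_mul]
  rw [h2, MvPolynomial.algebraMap_eq, C_mul_monomial, mul_one]

/-- decrement in coordinate i -/
def dec (u : Fin r → ℕ) (i : Fin r) : Fin r → ℕ := fun k => u k - (if k = i then 1 else 0)

lemma DU_dec {u : Fin r → ℕ} {i : Fin r} (hui : 0 < u i) :
    DU u = Finsupp.single i 1 + DU (dec u i) := by
  ext k
  rw [Finsupp.add_apply, DU_apply, DU_apply, Finsupp.single_apply, dec]
  by_cases hk : k = i
  · subst hk; simp; omega
  · rw [if_neg (fun h => hk h.symm), if_neg hk]; omega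

lemma Mon_factor {u : Fin r → ℕ} {i : Fin r} (hui : 0 < u i) :
    Mon (r := r) u = X i * Mon (dec u i) := by
  rw [Mon, Mon, DU_dec hui]
  conv_rhs => rw [← pow_one (X i : MvPolynomial (Fin r) ℂ), X_pow_eq_monomial,
    monomial_mul, one_mul]

lemma deg_Mon (u : Fin r → ℕ) : (Mon (r := r) u).totalDegree = ∑ i, u i := by
  rw [Mon, totalDegree_monomial _ (one_ne_zero)]
  rw [Finsupp.sum_fintype _ _ (fun i => rfl)]
  refine Finset.sum_congr rfl (fun i _ => DU_apply u i)

lemma deg_Bin (u v : Fin r → ℕ) :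
    (Bin (r := r) u v).totalDegree ≤ max (∑ i, u i) (∑ i, v i) := by
  rw [Bin, sub_eq_add_neg]
  refine le_trans (totalDegree_add _ _) ?_
  rw [totalDegree_neg, deg_Mon, deg_Mon]

lemma sig_dec {u : Fin r → ℕ} {i : Fin r} (hui : 0 < u i) (a : A) :
    sig ε (dec u i) a = sig ε u a - ε i a := by
  rw [sig_apply, sig_apply]
  have h1 : ∀ k : Fin r, dec u i k * ε k a = u k * ε k a - (if k = i then 1 else 0) * ε k a := by
    intro k; rw [dec]; rw [Nat.sub_mul]
  rw [Finset.sum_congr rfl (fun k _ => h1 k)]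
  rw [Finset.sum_tsub_distrib _ (fun k _ => ?_)]
  · congr 1
    rw [Finset.sum_eq_single i]
    · rw [if_pos rfl, one_mul]
    · intro k _ hk; rw [if_neg hk, zero_mul]
    · intro h; exact absurd (Finset.mem_univ i) h
  · by_cases hk : k = i
    · subst hk; rw [if_pos rfl, one_mul]
      exact Nat.le_mul_of_pos_left _ hui
    · rw [if_neg hk, zero_mul]; exact Nat.zero_le _

variable (s t) in
/-- circulation condition over ℕ -/
def CSfun (z : A → ℕ) : Prop :=
  ∀ v : V, ∑ a : A, (if t a = v then z a else 0) = ∑ a : A, (if s a = v then z a else 0)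

lemma CS_pcv {x : A → ℕ} (h : IsPrimitiveCycleVector s t x) : CSfun s t x :=
  fun v => pcv_circ h v

lemma CS_sig (hε : ∀ i, IsPrimitiveCycleVector s t (ε i)) (u : Fin r → ℕ) :
    CSfun s t (sig ε u) := by
  intro v
  have hkey : ∀ (h : A → V), ∑ a : A, (if h a = v then sig ε u a else 0)
      = ∑ i : Fin r, u i * ∑ a : A, (if h a = v then ε i a else 0) := by
    intro h
    have h1 : ∀ a : A, (if h a = v then sig ε u a else 0)
        = ∑ i : Fin r, (if h a = v then u i * ε i a else 0) := by
      intro a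
      by_cases hha : h a = v
      · rw [if_pos hha, sig_apply]
        exact Finset.sum_congr rfl (fun i _ => by rw [if_pos hha])
      · rw [if_neg hha]
        exact (Finset.sum_eq_zero (fun i _ => by rw [if_neg hha])).symm
    rw [Finset.sum_congr rfl (fun a _ => h1 a), Finset.sum_comm]
    refine Finset.sum_congr rfl (fun i _ => ?_)
    rw [Finset.mul_sum]
    refine Finset.sum_congr rfl (fun a _ => ?_)
    by_cases hha : h a = v
    · rw [if_pos hha, if_pos hha]
    · rw [if_neg hha, if_neg hha, mul_zero]
  rw [hkey t, hkey s]
  refine Finset.sum_congr rfl (fun i _ => ?_)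
  rw [pcv_circ (hε i) v]

lemma CS_sub {x y : A → ℕ} (hle : ∀ a, y a ≤ x a) (hx : CSfun s t x) (hy : CSfun s t y) :
    CSfun s t (fun a => x a - y a) := by
  intro v
  have hkey : ∀ (h : A → V), ∑ a : A, (if h a = v then x a - y a else 0)
      = ∑ a : A, (if h a = v then x a else 0) - ∑ a : A, (if h a = v then y a else 0) := by
    intro h
    rw [← Finset.sum_tsub_distrib _ (fun a _ => by by_cases hha : h a = v <;> simp [hha, hle a])]
    refine Finset.sum_congr rfl (fun a _ => ?_)
    by_cases hha : h a = v <;> simp [hha]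
  rw [hkey t, hkey s, hx v, hy v]


variable (ε) in
/-- the generating set: binomials of degree at most `d - 1` -/
def Gset (d : ℕ) : Set (MvPolynomial (Fin r) ℂ) :=
  {p | ∃ u v : Fin r → ℕ, sig ε u = sig ε v ∧ (∑ i, u i) ≤ d - 1 ∧ (∑ i, v i) ≤ d - 1 ∧
    p = Bin (r := r) u v}

lemma eq_zero_of_sig_eq_zero (hε : ∀ i, IsPrimitiveCycleVector s t (ε i))
    {u : Fin r → ℕ} (h : ∀ a, sig ε u a = 0) : ∀ i, u i = 0 := by
  intro i
  by_contra hc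
  obtain ⟨a, ha⟩ := pcv_exists_one (hε i)
  have h1 := le_sig (ε := ε) u i a
  rw [ha, mul_one, h a] at h1
  omega

lemma main_lemma (hε : ∀ i, IsPrimitiveCycleVector s t (ε i))
    (hall : ∀ x : A → ℕ, IsPrimitiveCycleVector s t x → ∃ i, x = ε i)
    (hinj : Function.Injective ε) (d : ℕ) (hd : 0 < d)
    (hdim : d = Module.finrank ℤ ↥(Submodule.span ℤ (setS s t))) :
    ∀ (n : ℕ) (u v : Fin r → ℕ), sig ε u = sig ε v → (∑ a, sig ε u a) ≤ n →
      Bin (r := r) u v ∈ Ideal.span (Gset ε d) := by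
  intro n
  induction n with
  | zero =>
      intro u v heq hn
      have hz : ∀ a, sig ε u a = 0 := by
        intro a
        have : sig ε u a ≤ ∑ b, sig ε u b :=
          Finset.single_le_sum (f := fun b => sig ε u b) (fun b _ => Nat.zero_le _)
            (Finset.mem_univ a)
        omega
      have hu := eq_zero_of_sig_eq_zero hε hz
      have hv := eq_zero_of_sig_eq_zero hε (fun a => by rw [← heq]; exact hz a)
      have huv : u = v := funext (fun i => by rw [hu i, hv i])
      rw [huv, Bin, sub_self]
      exact Ideal.zero_mem _
  | succ n ih =>
      intro u v heq hn
      have hshareCase : ∀ u' v' : Fin r → ℕ, sig ε u' = sig ε v' →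
          (∑ a, sig ε u' a) ≤ n + 1 → (∃ i, 0 < u' i ∧ 0 < v' i) →
          Bin (r := r) u' v' ∈ Ideal.span (Gset ε d) := by
        intro u' v' heq' hn' h'
        obtain ⟨i, hui, hvi⟩ := h'
        have hsd : sig ε (dec u' i) = sig ε (dec v' i) :=
          funext (fun a => by rw [sig_dec hui, sig_dec hvi, heq'])
        have hmeas : (∑ a, sig ε (dec u' i) a) ≤ n := by
          have h1 : ∑ a, sig ε (dec u' i) a = (∑ a, sig ε u' a) - ∑ a, ε i a := by
            rw [Finset.sum_congr rfl (fun a _ => sig_dec hui a)]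
            exact Finset.sum_tsub_distrib _ (fun a _ => by
              have h2 := le_sig (ε := ε) u' i a
              have h3 : ε i a ≤ u' i * ε i a := Nat.le_mul_of_pos_left _ hui
              omega)
          have h2 := pcv_sum_pos (hε i)
          omega
        have h := ih (dec u' i) (dec v' i) hsd hmeas
        rw [Bin, Mon_factor hui, Mon_factor hvi, ← mul_sub]
        exact Ideal.mul_mem_left _ _ h
      by_cases hshare : ∃ i, 0 < u i ∧ 0 < v i
      · exact hshareCase u v heq hn hshare
      · have hdisj : ∀ i, ¬(0 < u i ∧ 0 < v i) := fun i h => hshare ⟨i, h⟩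
        by_cases hu0 : ∀ i, u i = 0
        · have hz : ∀ a, sig ε u a = 0 := fun a => by
            rw [sig_apply]; exact Finset.sum_eq_zero (fun i _ => by rw [hu0 i, zero_mul])
          have hv := eq_zero_of_sig_eq_zero hε (fun a => by rw [← heq]; exact hz a)
          have huv : u = v := funext (fun i => by rw [hu0 i, hv i])
          rw [huv, Bin, sub_self]
          exact Ideal.zero_mem _
        · by_cases hv0 : ∀ j, v j = 0
          · have hz : ∀ a, sig ε v a = 0 := fun a => by
              rw [sig_apply]; exact Finset.sum_eq_zero (fun j _ => by rw [hv0 j, zero_mul])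
            have hu := eq_zero_of_sig_eq_zero hε (fun a => by rw [heq]; exact hz a)
            exact absurd hu hu0
          · by_cases hsmall : (∑ i, u i) ≤ d - 1 ∧ (∑ i, v i) ≤ d - 1
            · exact Ideal.subset_span ⟨u, v, heq, hsmall.1, hsmall.2, rfl⟩
            · have hbig : d ≤ ∑ i, u i ∨ d ≤ ∑ i, v i := by
                rcases not_and_or.mp hsmall with h | h
                · left; omega
                · right; omega
              have hZ : ∃ i j, 0 < u i ∧ 0 < v j ∧ ∀ a, ε i a + ε j a ≤ sig ε u a := by
                rcases hbig with hb | hb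
                · exact lemZ hε hinj d hd hdim u v heq hdisj hb
                · obtain ⟨j, i, hvj, hui, hle⟩ := lemZ hε hinj d hd hdim v u heq.symm
                    (fun i h => hdisj i ⟨h.2, h.1⟩) hb
                  refine ⟨i, j, hui, hvj, fun a => ?_⟩
                  have h1 := hle a
                  rw [← heq] at h1
                  omega
              obtain ⟨i, j, hui, hvj, hle⟩ := hZ
              have hle1 : ∀ a, ε i a ≤ sig ε u a := fun a => by have := hle a; omega
              have hCS1 : CSfun s t (fun a => sig ε u a - ε i a) :=
                CS_sub hle1 (CS_sig hε u) (CS_pcv (hε i))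
              have hle2 : ∀ a, ε j a ≤ sig ε u a - ε i a := fun a => by
                have := hle a; omega
              have hCSz : CSfun s t (fun a => sig ε u a - ε i a - ε j a) :=
                CS_sub hle2 hCS1 (CS_pcv (hε j))
              obtain ⟨w₀, hw₀⟩ := flow_decomp hall (∑ a, (sig ε u a - ε i a - ε j a))
                (fun a => sig ε u a - ε i a - ε j a) (le_refl _) hCSz
              set w : Fin r → ℕ :=
                fun k => w₀ k + (if k = i then 1 else 0) + (if k = j then 1 else 0) with hwdef
              have hsw : sig ε w = sig ε u := by
                funext a
                rw [sig_apply]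
                have hsplit : ∑ k, w k * ε k a
                    = (∑ k, w₀ k * ε k a) + (∑ k, (if k = i then 1 else 0) * ε k a)
                      + (∑ k, (if k = j then 1 else 0) * ε k a) := by
                  rw [← Finset.sum_add_distrib, ← Finset.sum_add_distrib]
                  exact Finset.sum_congr rfl (fun k _ => by rw [hwdef]; ring)
                have hone : ∀ (m : Fin r), ∑ k, (if k = m then 1 else 0) * ε k a = ε m a := by
                  intro m
                  rw [Finset.sum_eq_single m]
                  · rw [if_pos rfl, one_mul]
                  · intro k _ hk; rw [if_neg hk, zero_mul]
                  · intro h; exact absurd (Finset.mem_univ m) h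
                rw [hsplit, hone i, hone j, ← hw₀ a]
                have := hle a
                omega
              have hwival : w i = w₀ i + (if i = i then 1 else 0) + (if i = j then 1 else 0) :=
                rfl
              rw [show (if i = i then (1:ℕ) else 0) = 1 from if_pos rfl] at hwival
              have hwi : 0 < w i := by omega
              have hwjval : w j = w₀ j + (if j = i then 1 else 0) + (if j = j then 1 else 0) :=
                rfl
              rw [show (if j = j then (1:ℕ) else 0) = 1 from if_pos rfl] at hwjval
              have hwj : 0 < w j := by omega
              have h1 : Bin (r := r) u w ∈ Ideal.span (Gset ε d) :=
                hshareCase u w hsw.symm hn ⟨i, hui, hwi⟩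
              have h2 : Bin (r := r) w v ∈ Ideal.span (Gset ε d) := by
                refine hshareCase w v (hsw.trans heq) ?_ ⟨j, hwj, hvj⟩
                have : ∑ a, sig ε w a = ∑ a, sig ε u a := by rw [hsw]
                omega
              have hBB : Bin (r := r) u v = Bin (r := r) u w + Bin w v := by
                rw [Bin, Bin, Bin, sub_add_sub_cancel]
              rw [hBB]
              exact Ideal.add_mem _ h1 h2


lemma DU_coe (du : Fin r →₀ ℕ) : DU (⇑du) = du := Finsupp.equivFunOnFinite_symm_coe du

lemma aeval_Bin {u v : Fin r → ℕ} (heq : sig ε u = sig ε v) :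
    aeval (Fgen ε) (Bin (r := r) u v) = 0 := by
  rw [Bin, Mon, Mon, map_sub, aeval_Mon, aeval_Mon, heq, sub_self]

lemma ker_sub_span (hε : ∀ i, IsPrimitiveCycleVector s t (ε i))
    (hall : ∀ x : A → ℕ, IsPrimitiveCycleVector s t x → ∃ i, x = ε i)
    (hinj : Function.Injective ε) (d : ℕ) (hd : 0 < d)
    (hdim : d = Module.finrank ℤ ↥(Submodule.span ℤ (setS s t))) :
    ∀ (m : ℕ) (p : MvPolynomial (Fin r) ℂ), p.support.card ≤ m → aeval (Fgen ε) p = 0 →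
      p ∈ Ideal.span (Gset ε d) := by
  classical
  intro m
  induction m with
  | zero =>
      intro p hcard hker
      have : p.support = ∅ := Finset.card_eq_zero.mp (by omega)
      rw [support_eq_empty.mp this]
      exact Ideal.zero_mem _
  | succ m ih =>
      intro p hcard hker
      by_cases hp : p = 0
      · rw [hp]; exact Ideal.zero_mem _
      obtain ⟨du₀, hdu₀⟩ := support_nonempty.mpr hp
      set cls : Finset (Fin r →₀ ℕ) :=
        p.support.filter (fun du => DU (sig ε ⇑du) = DU (sig ε ⇑du₀)) with hclsdef
      have hdu₀cls : du₀ ∈ cls := Finset.mem_filter.mpr ⟨hdu₀, rfl⟩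
      -- the coefficients of a class sum to zero
      have haep : aeval (Fgen ε) p
          = ∑ du ∈ p.support, monomial (DU (sig ε ⇑du)) (coeff du p) := by
        conv_lhs => rw [p.as_sum]
        rw [map_sum]
        refine Finset.sum_congr rfl (fun du hdu => ?_)
        rw [show (monomial du) (coeff du p) = monomial (DU ⇑du) (coeff du p) by rw [DU_coe]]
        exact aeval_Mon (⇑du) (coeff du p)
      have hclssum : ∑ du ∈ cls, coeff du p = 0 := by
        have h1 : coeff (DU (sig ε ⇑du₀)) (aeval (Fgen ε) p) = 0 := by rw [hker, coeff_zero]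
        rw [haep, coeff_sum] at h1
        have h2 : ∑ du ∈ cls, coeff du p
            = ∑ du ∈ p.support, coeff (DU (sig ε ⇑du₀)) (monomial (DU (sig ε ⇑du)) (coeff du p)) := by
          rw [hclsdef, Finset.sum_filter]
          refine Finset.sum_congr rfl (fun du _ => ?_)
          rw [coeff_monomial]
        rw [h2]
        exact h1
      set q : MvPolynomial (Fin r) ℂ :=
        p - ∑ du ∈ cls, (coeff du p) • Bin (r := r) (⇑du) (⇑du₀) with hqdef
      have hsigeq : ∀ du ∈ cls, sig ε ⇑du = sig ε ⇑du₀ := by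
        intro du hdu
        have := (Finset.mem_filter.mp hdu).2
        exact Finsupp.equivFunOnFinite.symm.injective this
      have hqker : aeval (Fgen ε) q = 0 := by
        rw [hqdef, map_sub, hker, map_sum, zero_sub, neg_eq_zero]
        refine Finset.sum_eq_zero (fun du hdu => ?_)
        rw [map_smul, aeval_Bin (hsigeq du hdu), smul_zero]
      have hqcoeff : ∀ du', coeff du' q
          = coeff du' p - (if du' ∈ cls then coeff du' p else 0) := by
        intro du'
        rw [hqdef, coeff_sub]
        congr 1
        rw [coeff_sum]
        have h1 : ∀ du ∈ cls, coeff du' ((coeff du p) • Bin (r := r) (⇑du) (⇑du₀))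
            = (if du = du' then coeff du p else 0) - (if du₀ = du' then coeff du p else 0) := by
          intro du _
          rw [coeff_smul, Bin, Mon, Mon, coeff_sub, coeff_monomial, coeff_monomial,
            DU_coe, DU_coe, smul_eq_mul, mul_sub]
          congr 1
          · by_cases h : du = du'
            · rw [if_pos h, if_pos h, mul_one]
            · rw [if_neg h, if_neg h, mul_zero]
          · by_cases h : du₀ = du'
            · rw [if_pos h, if_pos h, mul_one]
            · rw [if_neg h, if_neg h, mul_zero]
        rw [Finset.sum_congr rfl h1, Finset.sum_sub_distrib]
        have h2 : ∑ du ∈ cls, (if du = du' then coeff du p else 0)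
            = if du' ∈ cls then coeff du' p else 0 := Finset.sum_ite_eq' cls du' _
        have h3 : ∑ du ∈ cls, (if du₀ = du' then coeff du p else 0) = 0 := by
          by_cases h : du₀ = du'
          · rw [Finset.sum_congr rfl (fun du _ => if_pos h), hclssum]
          · rw [Finset.sum_congr rfl (fun du _ => if_neg h), Finset.sum_const_zero]
        rw [h2, h3, sub_zero]
      have hqsupp : q.support ⊆ p.support.erase du₀ := by
        intro du' hdu'
        have hne := mem_support_iff.mp hdu'
        rw [hqcoeff du'] at hne
        refine Finset.mem_erase.mpr ⟨?_, ?_⟩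
        · intro hda
          subst hda
          rw [if_pos hdu₀cls, sub_self] at hne
          exact hne rfl
        · by_contra hmem
          have hc0 : coeff du' p = 0 := by
            by_contra hc
            exact hmem (mem_support_iff.mpr hc)
          have hncls : du' ∉ cls := fun h => hmem (Finset.mem_of_mem_filter du' h)
          rw [hc0, if_neg hncls, sub_zero] at hne
          exact hne rfl
      have hqcard : q.support.card ≤ m := by
        have h1 := Finset.card_le_card hqsupp
        have h2 := Finset.card_erase_of_mem hdu₀
        have h3 : 1 ≤ p.support.card := Finset.card_pos.mpr ⟨du₀, hdu₀⟩
        omega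
      have hq := ih q hqcard hqker
      have hBmem : ∀ du ∈ cls, (coeff du p) • Bin (r := r) (⇑du) (⇑du₀) ∈ Ideal.span (Gset ε d) := by
        intro du hdu
        rw [smul_eq_C_mul]
        refine Ideal.mul_mem_left _ _ ?_
        exact main_lemma hε hall hinj d hd hdim (∑ a, sig ε (⇑du) a) (⇑du) (⇑du₀)
          (hsigeq du hdu) (le_refl _)
      have hpq : p = q + ∑ du ∈ cls, (coeff du p) • Bin (r := r) (⇑du) (⇑du₀) := by
        rw [hqdef, sub_add_cancel]
      rw [hpq]
      exact Ideal.add_mem _ hq (Ideal.sum_mem _ hBmem)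

end Algebra

end Quiver

end Stmt18Aux

open Stmt18Aux in
/-- let `ε 1, …, ε r` be the characteristic vectors of the primitive
cycles of a quiver `Q` and `d > 0` the rank of the group generated by the monoid of
nonnegative integral circulations. Then the kernel of
`φ : ℂ[t_1, …, t_r] → ℂ[x_a]`, `t_i ↦ x^{ε i}`, is generated by polynomials of total
degree at most `d - 1`. -/
theorem stmt18 {V A : Type} [Fintype V] [Fintype A] [DecidableEq V] [DecidableEq A]
    (s t : A → V) (r : ℕ) (ε : Fin r → (A → ℕ))
    (hε : ∀ i, IsPrimitiveCycleVector s t (ε i))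
    (hall : ∀ x : A → ℕ, IsPrimitiveCycleVector s t x → ∃ i, x = ε i)
    (hinj : Function.Injective ε)
    (d : ℕ) (hd : 0 < d)
    (hdim : d = Module.finrank ℤ ↥(Submodule.span ℤ
      {x : A → ℤ | (∀ a, 0 ≤ x a) ∧ ∀ v : V,
        (∑ a : A, if t a = v then x a else 0) - (∑ a : A, if s a = v then x a else 0) = 0})) :
    ∃ G : Set (MvPolynomial (Fin r) ℂ),
      (∀ p ∈ G, p.totalDegree ≤ d - 1) ∧
      Ideal.span G = RingHom.ker (MvPolynomial.aeval (R := ℂ)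
        (fun i : Fin r => ∏ a : A, (X a : MvPolynomial A ℂ) ^ (ε i a))) := by
  classical
  have hdim' : d = Module.finrank ℤ ↥(Submodule.span ℤ (setS s t)) := hdim
  refine ⟨Gset ε d, ?_, ?_⟩
  · rintro p ⟨u, v, heq, hu, hv, rfl⟩
    exact le_trans (deg_Bin u v) (max_le hu hv)
  · have hF : (fun i : Fin r => ∏ a : A, (X a : MvPolynomial A ℂ) ^ (ε i a)) = Fgen ε := rfl
    rw [hF]
    apply le_antisymm
    · rw [Ideal.span_le]
      rintro p ⟨u, v, heq, -, -, rfl⟩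
      rw [SetLike.mem_coe, RingHom.mem_ker]
      exact aeval_Bin heq
    · intro p hp
      exact ker_sub_span hε hall hinj d hd hdim' p.support.card p (le_refl _)
        (RingHom.mem_ker.mp hp)
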